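/- (MPCC solutions need not solve the bilevel problem.) Consider the bilevel problem: minimize (x−1)² + y² over x ∈ ℝ and y minimizing x²·y over {y ∈ ℝ : y² ≤ 0}. Then: (i) for every x, the lower-level feasible set {y : y² ≤ 0} equals {0}, so the unique optimal solution of the bilevel problem is (x,y) = (1,0); (ii) the feasible set of its MPCC reformulation — triples (x,y,μ) with x² + 2μy = 0, μy² = 0, y² ≤ 0, μ ≥ 0 — equals {(0,0,μ) : μ ≥ 0}; consequently every optimal solution of the MPCC has (x,y) = (0,0), which is not an optimal solution of the bilevel problem. -/
import Mathlib


/-- Feasibility for the bilevel problem of Example `BP vs MPCC II`: `y` minimizes `x²·y` over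
`{y : y² ≤ 0}`. -/
def BP2Feasible (x y : ℝ) : Prop :=
  y ^ 2 ≤ 0 ∧ ∀ y' : ℝ, y' ^ 2 ≤ 0 → x ^ 2 * y ≤ x ^ 2 * y'

/-- Optimality for the bilevel problem: feasibility plus minimality of `(x−1)² + y²`. -/
def BP2Optimal (x y : ℝ) : Prop :=
  BP2Feasible x y ∧
  ∀ x' y' : ℝ, BP2Feasible x' y' → (x - 1) ^ 2 + y ^ 2 ≤ (x' - 1) ^ 2 + y' ^ 2

/-- Feasibility for the MPCC reformulation, in variables `(x, y, μ)`. -/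
def MPCC2Feasible (x y μ : ℝ) : Prop :=
  x ^ 2 + 2 * μ * y = 0 ∧ μ * y ^ 2 = 0 ∧ y ^ 2 ≤ 0 ∧ 0 ≤ μ

/-- MPCC solutions need not solve the bilevel problem: (i) the lower-level feasible set
`{y : y² ≤ 0}` is `{0}` and the unique optimal solution of the bilevel problem is `(1, 0)`;
(ii) the MPCC feasible set is `{(0, 0, μ) : μ ≥ 0}`, so every optimal solution of the MPCC
has `(x, y) = (0, 0)`, which is not optimal for the bilevel problem. -/
theorem MPCC_solutions_not_bilevel :
    ({y : ℝ | y ^ 2 ≤ 0} = {0}) ∧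
    BP2Optimal 1 0 ∧
    (∀ x y : ℝ, BP2Optimal x y → x = 1 ∧ y = 0) ∧
    ({t : ℝ × ℝ × ℝ | MPCC2Feasible t.1 t.2.1 t.2.2} =
      {t : ℝ × ℝ × ℝ | t.1 = 0 ∧ t.2.1 = 0 ∧ 0 ≤ t.2.2}) ∧
    (∀ x y μ : ℝ, MPCC2Feasible x y μ →
      (∀ x' y' μ' : ℝ, MPCC2Feasible x' y' μ' →
        (x - 1) ^ 2 + y ^ 2 ≤ (x' - 1) ^ 2 + y' ^ 2) →
      x = 0 ∧ y = 0) ∧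
    ¬ BP2Optimal 0 0 := by

  have hzero : ∀ y : ℝ, y ^ 2 ≤ 0 → y = 0 := fun y h =>
    pow_eq_zero_iff (n := 2) (by norm_num) |>.mp (le_antisymm h (sq_nonneg y))
  have hfeas : ∀ x y : ℝ, BP2Feasible x y → y = 0 := fun x y h => hzero y h.1
  have hfeas10 : BP2Feasible 1 0 := ⟨by norm_num, fun y' hy' => by rw [hzero y' hy']⟩
  refine ⟨?_, ?_, ?_, ?_, ?_, ?_⟩
  · ext y; simp only [Set.mem_setOf_eq, Set.mem_singleton_iff]
    exact ⟨hzero y, fun h => by simp [h]⟩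
  · refine ⟨hfeas10, fun x' y' h => ?_⟩
    have := sq_nonneg (x' - 1); have := sq_nonneg y'; norm_num; linarith
  · intro x y h
    have hy := hfeas x y h.1
    have := h.2 1 0 hfeas10
    subst hy
    have hx := sq_nonneg (x - 1)
    constructor
    · nlinarith
    · rfl
  · ext t; simp only [Set.mem_setOf_eq, MPCC2Feasible]
    constructor
    · rintro ⟨h1, h2, h3, h4⟩
      have hy := hzero _ h3
      refine ⟨?_, hy, h4⟩
      have := hzero t.1 (by nlinarith)
      exact this
    · rintro ⟨h1, h2, h3⟩
      refine ⟨by rw [h1, h2]; ring, by rw [h2]; ring, by rw [h2]; norm_num, h3⟩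
  · intro x y μ h _
    have hy := hzero y h.2.2.1
    have h1 := h.1
    subst hy
    have hx : x = 0 := hzero x (by nlinarith)
    exact ⟨hx, rfl⟩
  · intro h
    have := h.2 1 0 hfeas10
    norm_num at this
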